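/- Characterization lemma: Let P = ⟨Σ, C, R⟩ be a program with C strongly regular and well-typed, and let [σ] = (σ_t, [σ_d]) be a valuation over the term model M_P(V) represented by a substitution σ = (σ_t, σ_d) with σ_d mapping data variables to partial data terms over X. Then for all e, a, b ∈ Expr_{Σ⊥}(X) and all t ∈ Term_{Σ⊥}(X): (a) [t] ∈ ⟦e⟧^{M_P(V)}[σ_d] if and only if eσ_d →_P t; (b) (M_P(V), [σ_d]) ⊨ e → t if and only if eσ_d →_P tσ_d; (c) (M_P(V), [σ_d]) ⊨ a == b if and only if aσ_d ==_P bσ_d. -/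

import Mathlib

namespace ACRWL

/-- Partial expressions: data variables, bottom, data constructor applications
and defined function applications (symbols named by natural numbers). -/
inductive Expr : Type where
  | var : ℕ → Expr
  | bot : Expr
  | con : ℕ → List Expr → Expr
  | fn  : ℕ → List Expr → Expr

namespace Expr

/-- Occurrence of a data variable in an expression. -/
inductive Occurs (x : ℕ) : Expr → Prop where
  | var : Occurs x (var x)
  | con {c : ℕ} {es : List Expr} {e : Expr} : e ∈ es → Occurs x e → Occurs x (con c es)
  | fn {f : ℕ} {es : List Expr} {e : Expr} : e ∈ es → Occurs x e → Occurs x (fn f es)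

/-- Partial data terms: built from variables, ⊥ and data constructors only. -/
inductive IsTerm : Expr → Prop where
  | var (x : ℕ) : IsTerm (var x)
  | bot : IsTerm bot
  | con {c : ℕ} {es : List Expr} : (∀ e ∈ es, IsTerm e) → IsTerm (con c es)

/-- Total expressions: no occurrence of ⊥. -/
inductive NoBot : Expr → Prop where
  | var (x : ℕ) : NoBot (var x)
  | con {c : ℕ} {es : List Expr} : (∀ e ∈ es, NoBot e) → NoBot (con c es)
  | fn {f : ℕ} {es : List Expr} : (∀ e ∈ es, NoBot e) → NoBot (fn f es)

/-- Total data terms. -/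
def IsTotalTerm (e : Expr) : Prop := IsTerm e ∧ NoBot e

/-- Application of a data substitution. -/
def subst (σ : ℕ → Expr) : Expr → Expr
  | var x => σ x
  | bot => bot
  | con c es => con c (es.attach.map fun e => subst σ e.1)
  | fn f es => fn f (es.attach.map fun e => subst σ e.1)
termination_by e => sizeOf e
decreasing_by
  all_goals (simp only [Expr.con.sizeOf_spec, Expr.fn.sizeOf_spec]; have := List.sizeOf_lt_of_mem e.2; omega)

/-- Number of occurrences of the variable `x`. -/
def varCount (x : ℕ) : Expr → ℕ
  | var y => if y = x then 1 else 0
  | bot => 0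
  | con _ es => (es.attach.map fun e => varCount x e.1).sum
  | fn _ es => (es.attach.map fun e => varCount x e.1).sum
termination_by e => sizeOf e
decreasing_by
  all_goals (simp only [Expr.con.sizeOf_spec, Expr.fn.sizeOf_spec]; have := List.sizeOf_lt_of_mem e.2; omega)

end Expr

/-- A set of equational axioms between (total data) terms. -/
abbrev Axioms := Set (Expr × Expr)

/-- A data substitution mapping every variable to a partial data term. -/
def TermSub (σ : ℕ → Expr) : Prop := ∀ x, (σ x).IsTerm

/-- `σ` is safe for `t`: variables occurring more than once in `t`
are mapped to total data terms. -/
def SafeSub (σ : ℕ → Expr) (t : Expr) : Prop :=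
  ∀ x, 2 ≤ Expr.varCount x t → Expr.IsTotalTerm (σ x)

/-- Well-formed set of equational axioms: a finite set of equations between
total data terms. -/
def WfAxioms (C : Axioms) : Prop :=
  C.Finite ∧ ∀ p ∈ C, Expr.IsTotalTerm p.1 ∧ Expr.IsTotalTerm p.2

/-- `[C]_⊒` : the instances of the axioms of `C`, read in both directions,
under safe partial data substitutions. -/
def CInstances (C : Axioms) : Set (Expr × Expr) :=
  { q | ∃ p ∈ C, ∃ σ : ℕ → Expr, TermSub σ ∧
      ((SafeSub σ p.1 ∧ q = (p.1.subst σ, p.2.subst σ)) ∨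
       (SafeSub σ p.2 ∧ q = (p.2.subst σ, p.1.subst σ))) }

/-- Every axiom is regular : both sides have the same data variables. -/
def RegularAxioms (C : Axioms) : Prop :=
  ∀ p ∈ C, ∀ x, Expr.Occurs x p.1 ↔ Expr.Occurs x p.2

/-- Every axiom is non-collapsing : neither side is a variable. -/
def NonCollapsing (C : Axioms) : Prop :=
  ∀ p ∈ C, (∀ x, p.1 ≠ Expr.var x) ∧ (∀ x, p.2 ≠ Expr.var x)

/-- Strongly regular set of axioms. -/
def StronglyRegular (C : Axioms) : Prop := RegularAxioms C ∧ NonCollapsing C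

/-- The inequational calculus associated to `C`, deriving approximation
inequalities `s ⊒ t` between partial data terms. -/
inductive Geq (C : Axioms) : Expr → Expr → Prop where
  | bot {t : Expr} : t.IsTerm → Geq C t Expr.bot
  | refl {t : Expr} : t.IsTerm → Geq C t t
  | trans {t t' t'' : Expr} : Geq C t t' → Geq C t' t'' → Geq C t t''
  | mono {c : ℕ} {ts ss : List Expr} : ts.length = ss.length →
      (∀ p ∈ ts.zip ss, Geq C p.1 p.2) → Geq C (Expr.con c ts) (Expr.con c ss)
  | ax {s t : Expr} : (s, t) ∈ CInstances C → Geq C s t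

/-- `s ≈_C t` iff `s ⊒_C t` and `t ⊒_C s`. -/
def EqC (C : Axioms) (s t : Expr) : Prop := Geq C s t ∧ Geq C t s

end ACRWL

namespace ACRWL

/-- A defining rule `f(t₁,…,tₙ) → r ⇐ a₁ == b₁, …, a_m == b_m`. -/
structure Rule : Type where
  fname : ℕ
  lhs : List Expr
  rhs : Expr
  conds : List (Expr × Expr)

/-- Application of a data substitution to a defining rule. -/
def Rule.subst (σ : ℕ → Expr) (ρ : Rule) : Rule :=
  ⟨ρ.fname, ρ.lhs.map (Expr.subst σ), ρ.rhs.subst σ,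
    ρ.conds.map fun p => (p.1.subst σ, p.2.subst σ)⟩

/-- A linear tuple of terms: no variable occurs more than once in the tuple. -/
def Linear (ts : List Expr) : Prop := ∀ x : ℕ, (ts.map (Expr.varCount x)).sum ≤ 1

/-- Well-formed defining rule: linear left-hand side made of total data
terms; total right-hand side and conditions. -/
def WfRule (ρ : Rule) : Prop :=
  Linear ρ.lhs ∧ (∀ t ∈ ρ.lhs, Expr.IsTotalTerm t) ∧ ρ.rhs.NoBot ∧
  ∀ p ∈ ρ.conds, p.1.NoBot ∧ p.2.NoBot

/-- A program: a finite set of equational axioms for constructors together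
with a finite set of defining rules for functions. -/
structure Program : Type where
  C : Axioms
  R : Set Rule
  wfC : WfAxioms C
  finR : R.Finite
  wfR : ∀ ρ ∈ R, WfRule ρ

/-- `[R]_→` : all instances of rules of the program under
partial data substitutions. -/
def RInstances (P : Program) : Set Rule :=
  { ρ' | ∃ ρ ∈ P.R, ∃ σ : ℕ → Expr, TermSub σ ∧ ρ' = ρ.subst σ }

/-- Statements derived by the rewriting calculi: reduction/approximation
statements `e → e'` and joinability statements `e == e'`. -/
inductive Stm : Type where
  | red : Expr → Expr → Stm
  | join : Expr → Expr → Stm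

/-- The Basic Rewriting Calculus (BRC) of a program. -/
inductive BRC (P : Program) : Stm → Prop where
  | bot (e : Expr) : BRC P (Stm.red e Expr.bot)
  | refl (e : Expr) : BRC P (Stm.red e e)
  | trans {e e' e'' : Expr} :
      BRC P (Stm.red e e') → BRC P (Stm.red e' e'') → BRC P (Stm.red e e'')
  | monoCon {c : ℕ} {es es' : List Expr} : es.length = es'.length →
      (∀ p ∈ es.zip es', BRC P (Stm.red p.1 p.2)) →
      BRC P (Stm.red (Expr.con c es) (Expr.con c es'))
  | monoFn {f : ℕ} {es es' : List Expr} : es.length = es'.length →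
      (∀ p ∈ es.zip es', BRC P (Stm.red p.1 p.2)) →
      BRC P (Stm.red (Expr.fn f es) (Expr.fn f es'))
  | rule {ρ : Rule} : ρ ∈ RInstances P →
      (∀ p ∈ ρ.conds, BRC P (Stm.join p.1 p.2)) →
      BRC P (Stm.red (Expr.fn ρ.fname ρ.lhs) ρ.rhs)
  | mut {s t : Expr} : (s, t) ∈ CInstances P.C → BRC P (Stm.red s t)
  | join {e e' t : Expr} : t.IsTotalTerm →
      BRC P (Stm.red e t) → BRC P (Stm.red e' t) → BRC P (Stm.join e e')

/-- The Goal-Oriented Rewriting Calculus (GORC) of a program. -/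
inductive GORC (P : Program) : Stm → Prop where
  | bot (e : Expr) : GORC P (Stm.red e Expr.bot)
  | rrefl (x : ℕ) : GORC P (Stm.red (Expr.var x) (Expr.var x))
  | dc {c : ℕ} {es ts : List Expr} : es.length = ts.length →
      (∀ p ∈ es.zip ts, GORC P (Stm.red p.1 p.2)) →
      GORC P (Stm.red (Expr.con c es) (Expr.con c ts))
  | omut {c : ℕ} {es ts : List Expr} {s t : Expr} : t ≠ Expr.bot →
      (Expr.con c ts, s) ∈ CInstances P.C → es.length = ts.length →
      (∀ p ∈ es.zip ts, GORC P (Stm.red p.1 p.2)) →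
      GORC P (Stm.red s t) → GORC P (Stm.red (Expr.con c es) t)
  | orule {es : List Expr} {ρ : Rule} {t : Expr} : t ≠ Expr.bot →
      ρ ∈ RInstances P → es.length = ρ.lhs.length →
      (∀ p ∈ es.zip ρ.lhs, GORC P (Stm.red p.1 p.2)) →
      (∀ p ∈ ρ.conds, GORC P (Stm.join p.1 p.2)) →
      GORC P (Stm.red ρ.rhs t) → GORC P (Stm.red (Expr.fn ρ.fname es) t)
  | join {e e' t : Expr} : t.IsTotalTerm →
      GORC P (Stm.red e t) → GORC P (Stm.red e' t) → GORC P (Stm.join e e')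

end ACRWL

namespace ACRWL

/-- Polymorphic types built from type variables and type constructors. -/
inductive Ty : Type where
  | tvar : ℕ → Ty
  | tcon : ℕ → List Ty → Ty

namespace Ty

/-- Occurrence of a type variable in a type. -/
inductive OccursT (α : ℕ) : Ty → Prop where
  | tvar : OccursT α (tvar α)
  | tcon {K : ℕ} {τs : List Ty} {τ : Ty} : τ ∈ τs → OccursT α τ → OccursT α (tcon K τs)

/-- Application of a type substitution. -/
def subst (σ : ℕ → Ty) : Ty → Ty
  | tvar α => σ α
  | tcon K τs => tcon K (τs.attach.map fun τ => subst σ τ.1)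
termination_by τ => sizeOf τ
decreasing_by
  all_goals (simp only [Ty.tcon.sizeOf_spec]; have := List.sizeOf_lt_of_mem τ.2; omega)

end Ty

/-- A principal type declaration `(τ₁,…,τₙ) → τ`. -/
structure Decl : Type where
  args : List Ty
  res : Ty

/-- Transparency: every type variable of the argument types occurs in the
result type. -/
def Decl.Transparent (d : Decl) : Prop :=
  ∀ α : ℕ, (∃ τ ∈ d.args, Ty.OccursT α τ) → Ty.OccursT α d.res

/-- Instance of a declaration under a type substitution. -/
def Decl.substT (σt : ℕ → Ty) (d : Decl) : Decl :=
  ⟨d.args.map (Ty.subst σt), d.res.subst σt⟩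

/-- A variant of a declaration: a renaming of its type variables. -/
def IsVariant (d d' : Decl) : Prop :=
  ∃ ρ : ℕ → ℕ, Function.Injective ρ ∧ d' = d.substT (fun α => Ty.tvar (ρ α))

/-- A polymorphic signature: (optional) principal type declarations for data
constructors and for defined function symbols, the former transparent. -/
structure Signature : Type where
  dc : ℕ → Option Decl
  fs : ℕ → Option Decl
  dc_trans : ∀ c d, dc c = some d → Decl.Transparent d

/-- An environment: at most one type annotation per data variable. -/
abbrev Env := ℕ → Option Ty

/-- Instance of an environment under a type substitution. -/
def Env.substT (V : Env) (σt : ℕ → Ty) : Env := fun x => (V x).map (Ty.subst σt)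

/-- The type inference system: `HasType Sg V e τ` is the judgement
`V ⊢_{Σ⊥} e : τ`.  The symbol `⊥` has principal type `⊥ : → α`, hence
every type is an admissible instance for it. -/
inductive HasType (Sg : Signature) (V : Env) : Expr → Ty → Prop where
  | var {x : ℕ} {τ : Ty} : V x = some τ → HasType Sg V (Expr.var x) τ
  | bot (τ : Ty) : HasType Sg V Expr.bot τ
  | con {c : ℕ} {es : List Expr} {d : Decl} {σt : ℕ → Ty} :
      Sg.dc c = some d → es.length = d.args.length →
      (∀ p ∈ es.zip d.args, HasType Sg V p.1 (Ty.subst σt p.2)) →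
      HasType Sg V (Expr.con c es) (Ty.subst σt d.res)
  | fn {f : ℕ} {es : List Expr} {d : Decl} {σt : ℕ → Ty} :
      Sg.fs f = some d → es.length = d.args.length →
      (∀ p ∈ es.zip d.args, HasType Sg V p.1 (Ty.subst σt p.2)) →
      HasType Sg V (Expr.fn f es) (Ty.subst σt d.res)

/-- Occurrence of a function symbol in an expression. -/
inductive FnOccurs (f : ℕ) : Expr → Prop where
  | head {es : List Expr} : FnOccurs f (Expr.fn f es)
  | con {c : ℕ} {es : List Expr} {e : Expr} : e ∈ es → FnOccurs f e → FnOccurs f (Expr.con c es)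
  | fn {g : ℕ} {es : List Expr} {e : Expr} : e ∈ es → FnOccurs f e → FnOccurs f (Expr.fn g es)

end ACRWL

namespace ACRWL

/-- A regular defining rule: every variable of the right-hand side occurs in
the left-hand side. -/
def RegularRule (ρ : Rule) : Prop :=
  ∀ x : ℕ, Expr.Occurs x ρ.rhs → ∃ t ∈ ρ.lhs, Expr.Occurs x t

/-- A well-typed (regular) defining rule for `f : (τ₁,…,τₙ) → τ`: in some
environment the left-hand side arguments have the declared argument types,
the right-hand side has the declared result type, and the two sides of every
condition share a type. -/
def WellTypedRule (Sg : Signature) (ρ : Rule) : Prop :=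
  ∃ d : Decl, Sg.fs ρ.fname = some d ∧ ρ.lhs.length = d.args.length ∧
    ∃ V : Env,
      (∀ p ∈ ρ.lhs.zip d.args, HasType Sg V p.1 p.2) ∧
      HasType Sg V ρ.rhs d.res ∧
      ∀ p ∈ ρ.conds, ∃ τ : Ty, HasType Sg V p.1 τ ∧ HasType Sg V p.2 τ

/-- A well-typed strongly regular equational axiom
`c(t₁,…,tₙ) ≈ d(s₁,…,s_m)`: the principal types of `c` and `d` admit
variants with a common result type `τ` such that both sides have type `τ`
in some environment. -/
def WellTypedAxiom (Sg : Signature) (p : Expr × Expr) : Prop :=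
  ∃ (c : ℕ) (ts : List Expr) (d : ℕ) (ss : List Expr)
      (τs τs' : List Ty) (τ : Ty),
    p.1 = Expr.con c ts ∧ p.2 = Expr.con d ss ∧
    (∃ D, Sg.dc c = some D ∧ IsVariant D ⟨τs, τ⟩) ∧
    (∃ D, Sg.dc d = some D ∧ IsVariant D ⟨τs', τ⟩) ∧
    ∃ V : Env, HasType Sg V p.1 τ ∧ HasType Sg V p.2 τ

/-- A well-typed strongly regular program. -/
def WellTypedProgram (Sg : Signature) (P : Program) : Prop :=
  StronglyRegular P.C ∧
  (∀ p ∈ P.C, WellTypedAxiom Sg p) ∧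
  (∀ ρ ∈ P.R, RegularRule ρ ∧ WellTypedRule Sg ρ)

end ACRWL

namespace ACRWL

/-- Expression whose data variables all belong to the environment `V`
(i.e. to the set `X` of variables of `V`). -/
def ExprOver (V : Env) (e : Expr) : Prop := ∀ x, Expr.Occurs x e → (V x).isSome

/-- Partial data term over the variables of `V`: an element (representative)
of the data universe of the term model `M_P(V)`. -/
def TermOver (V : Env) (t : Expr) : Prop := t.IsTerm ∧ ExprOver V t

/-- `[t]` is a maximal (totally defined) element of the data universe of the
term model. -/
def MaxClass (P : Program) (V : Env) (t : Expr) : Prop :=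
  ∀ s, TermOver V s → Geq P.C s t → Geq P.C t s

/-- Denotation in the term model `M_P(V)` under the data valuation
represented by the substitution `σd`:  `MDen P σd e t` means
`[t] ∈ ⟦e⟧^{M_P(V)}[σd]`. -/
inductive MDen (P : Program) (σd : ℕ → Expr) : Expr → Expr → Prop where
  | bot {t : Expr} : EqC P.C t Expr.bot → MDen P σd Expr.bot t
  | var {x : ℕ} {t : Expr} : Geq P.C (σd x) t → MDen P σd (Expr.var x) t
  | con {c : ℕ} {es ts : List Expr} {t : Expr} : es.length = ts.length →
      (∀ p ∈ es.zip ts, MDen P σd p.1 p.2) →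
      Geq P.C (Expr.con c ts) t → MDen P σd (Expr.con c es) t
  | fn {f : ℕ} {es ts : List Expr} {t t' : Expr} : es.length = ts.length →
      (∀ p ∈ es.zip ts, MDen P σd p.1 p.2) →
      GORC P (Stm.red (Expr.fn f ts) t') → EqC P.C t t' →
      MDen P σd (Expr.fn f es) t

/-- The term model satisfies `a == b` under the valuation `[σd]`. -/
def MJoinSat (P : Program) (V : Env) (σd : ℕ → Expr) (a b : Expr) : Prop :=
  ∃ s, TermOver V s ∧ MaxClass P V s ∧ MDen P σd a s ∧ MDen P σd b s

/-- The term model satisfies `e → e'` under the valuation `[σd]`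
(denotation inclusion). -/
def MRedSat (P : Program) (σd : ℕ → Expr) (e e' : Expr) : Prop :=
  ∀ s, MDen P σd e' s → MDen P σd e s

/-- The valuation `[σd]` over the term model is safe for `t`. -/
def MSafeVal (P : Program) (V : Env) (σd : ℕ → Expr) (t : Expr) : Prop :=
  ∀ x, 2 ≤ Expr.varCount x t → MaxClass P V (σd x)

/-- A substitution representing a data valuation over the term model. -/
def MValuation (V : Env) (σd : ℕ → Expr) : Prop :=
  TermSub σd ∧ ∀ x, TermOver V (σd x)

/-- The term model satisfies a defining rule. -/
def MSatRule (P : Program) (V : Env) (ρ : Rule) : Prop :=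
  ∀ σd, MValuation V σd → (∀ p ∈ ρ.conds, MJoinSat P V σd p.1 p.2) →
    MRedSat P σd (Expr.fn ρ.fname ρ.lhs) ρ.rhs

/-- The term model satisfies an equational axiom. -/
def MSatAxiom (P : Program) (V : Env) (p : Expr × Expr) : Prop :=
  ∀ σd, MValuation V σd →
    (MSafeVal P V σd p.1 → MRedSat P σd p.1 p.2) ∧
    (MSafeVal P V σd p.2 → MRedSat P σd p.2 p.1)

/-- The term model `M_P(V)` is a model of `P`. -/
def MModels (P : Program) (V : Env) : Prop :=
  (∀ ρ ∈ P.R, MSatRule P V ρ) ∧ (∀ p ∈ P.C, MSatAxiom P V p)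

end ACRWL


namespace ACRWL
namespace Expr

@[simp] theorem subst_var (σ : ℕ → Expr) (x : ℕ) : (var x).subst σ = σ x := by
  rw [subst]

@[simp] theorem subst_bot (σ : ℕ → Expr) : Expr.bot.subst σ = Expr.bot := by
  rw [subst]

@[simp] theorem subst_con (σ : ℕ → Expr) (c : ℕ) (es : List Expr) :
    (con c es).subst σ = con c (es.map (subst σ)) := by
  rw [subst]; simp [List.attach_map_val]

@[simp] theorem subst_fn (σ : ℕ → Expr) (f : ℕ) (es : List Expr) :
    (fn f es).subst σ = fn f (es.map (subst σ)) := by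
  rw [subst]; simp [List.attach_map_val]

theorem varCount_var (x y : ℕ) : varCount x (var y) = if y = x then 1 else 0 := by
  rw [varCount]

theorem varCount_con (x c : ℕ) (es : List Expr) :
    varCount x (con c es) = (es.map (varCount x)).sum := by
  rw [varCount]; simp [List.attach_map_val]

theorem varCount_fn (x f : ℕ) (es : List Expr) :
    varCount x (fn f es) = (es.map (varCount x)).sum := by
  rw [varCount]; simp [List.attach_map_val]

end Expr
end ACRWL

namespace ACRWL

theorem mem_zip_self {α : Type _} {l : List α} : ∀ {p : α × α}, p ∈ l.zip l → p.1 = p.2 ∧ p.1 ∈ l := by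
  induction l with
  | nil => intro p h; cases h
  | cons a l ih =>
    intro p h
    rw [List.zip_cons_cons, List.mem_cons] at h
    rcases h with h | h
    · subst h; exact ⟨rfl, List.mem_cons_self⟩
    · rcases ih h with ⟨h1, h2⟩; exact ⟨h1, List.mem_cons_of_mem _ h2⟩

theorem zip_rel_trans {α β γ : Type _} {A : α → β → Prop} {B : β → γ → Prop} {C : α → γ → Prop}
    (hABC : ∀ a b c, A a b → B b c → C a c) :
    ∀ (l1 : List α) (l2 : List β) (l3 : List γ), l1.length = l2.length →
    (∀ p ∈ l1.zip l2, A p.1 p.2) → (∀ p ∈ l2.zip l3, B p.1 p.2) →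
    ∀ p ∈ l1.zip l3, C p.1 p.2 := by
  intro l1
  induction l1 with
  | nil => intro l2 l3 _ _ _ p hp; cases hp
  | cons a l1 ih =>
    intro l2 l3 hlen hA hB p hp
    cases l2 with
    | nil => cases hlen
    | cons b l2 =>
      cases l3 with
      | nil => cases hp
      | cons c l3 =>
        rw [List.zip_cons_cons, List.mem_cons] at hp
        rcases hp with hp | hp
        · subst hp
          exact hABC a b c (hA _ (List.mem_cons_self)) (hB _ (List.mem_cons_self))
        · exact ih l2 l3 (by simpa using hlen)
            (fun q hq => hA q (List.mem_cons_of_mem _ hq))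
            (fun q hq => hB q (List.mem_cons_of_mem _ hq)) p hp

theorem mem_right_of_zip {α β : Type _} :
    ∀ {l1 : List α} {l2 : List β}, l1.length = l2.length → ∀ {b}, b ∈ l2 →
      ∃ a, (a, b) ∈ l1.zip l2 := by
  intro l1
  induction l1 with
  | nil => intro l2 hlen b hb; cases l2 with
    | nil => cases hb
    | cons c l2 => cases hlen
  | cons a l1 ih =>
    intro l2 hlen b hb
    cases l2 with
    | nil => cases hb
    | cons c l2 =>
      rcases List.mem_cons.1 hb with h | h
      · subst h; exact ⟨a, List.mem_cons_self⟩
      · rcases ih (by simpa using hlen) h with ⟨a', ha'⟩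
        exact ⟨a', List.mem_cons_of_mem _ ha'⟩

namespace Expr

theorem isTerm_subst {σ : ℕ → Expr} (hσ : TermSub σ) : ∀ {e : Expr}, e.IsTerm → (e.subst σ).IsTerm := by
  intro e h
  induction h with
  | var x => simpa using hσ x
  | bot => simpa using IsTerm.bot
  | con _ ih =>
    simp only [subst_con]
    exact IsTerm.con (by
      intro e' he'
      rcases List.mem_map.1 he' with ⟨a, ha, rfl⟩
      exact ih a ha)

theorem nobot_subst {σ : ℕ → Expr} : ∀ {e : Expr}, e.NoBot →
    (∀ x, Occurs x e → (σ x).NoBot) → (e.subst σ).NoBot := by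
  intro e h
  induction h with
  | var x => intro hx; simpa using hx x Occurs.var
  | con _ ih =>
    intro hx
    simp only [subst_con]
    exact NoBot.con (by
      intro e' he'
      rcases List.mem_map.1 he' with ⟨a, ha, rfl⟩
      exact ih a ha (fun x hox => hx x (Occurs.con ha hox)))
  | fn _ ih =>
    intro hx
    simp only [subst_fn]
    exact NoBot.fn (by
      intro e' he'
      rcases List.mem_map.1 he' with ⟨a, ha, rfl⟩
      exact ih a ha (fun x hox => hx x (Occurs.fn ha hox)))

theorem nobot_subst_inv {σ : ℕ → Expr} {x : ℕ} : ∀ {e : Expr}, Occurs x e →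
    (e.subst σ).NoBot → (σ x).NoBot := by
  intro e h
  induction h with
  | var => simp
  | con hmem _ ih =>
    intro hnb
    simp only [subst_con] at hnb
    cases hnb with
    | con h' => exact ih (h' _ (List.mem_map_of_mem hmem))
  | fn hmem _ ih =>
    intro hnb
    simp only [subst_fn] at hnb
    cases hnb with
    | fn h' => exact ih (h' _ (List.mem_map_of_mem hmem))

theorem occurs_subst {σ : ℕ → Expr} {y : ℕ} :
    ∀ (e : Expr), Occurs y (e.subst σ) → ∃ x, Occurs x e ∧ Occurs y (σ x)
  | var x, h => ⟨x, Occurs.var, by simpa using h⟩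
  | bot, h => by simp at h; cases h
  | con c es, h => by
    simp only [subst_con] at h
    cases h with
    | con hmem hocc =>
      rcases List.mem_map.1 hmem with ⟨a, ha, rfl⟩
      rcases occurs_subst a hocc with ⟨x, hx, hy⟩
      exact ⟨x, Occurs.con ha hx, hy⟩
  | fn f es, h => by
    simp only [subst_fn] at h
    cases h with
    | fn hmem hocc =>
      rcases List.mem_map.1 hmem with ⟨a, ha, rfl⟩
      rcases occurs_subst a hocc with ⟨x, hx, hy⟩
      exact ⟨x, Occurs.fn ha hx, hy⟩
termination_by e => sizeOf e
decreasing_by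
  all_goals (simp only [Expr.con.sizeOf_spec, Expr.fn.sizeOf_spec]; have := List.sizeOf_lt_of_mem ha; omega)

theorem subst_subst (σ θ : ℕ → Expr) :
    ∀ (e : Expr), (e.subst σ).subst θ = e.subst (fun x => (σ x).subst θ)
  | var x => by simp
  | bot => by simp
  | con c es => by
    simp only [subst_con, List.map_map]
    exact congrArg _ (List.map_congr_left fun a ha => subst_subst σ θ a)
  | fn f es => by
    simp only [subst_fn, List.map_map]
    exact congrArg _ (List.map_congr_left fun a ha => subst_subst σ θ a)
termination_by e => sizeOf e
decreasing_by
  all_goals (simp only [Expr.con.sizeOf_spec, Expr.fn.sizeOf_spec]; have := List.sizeOf_lt_of_mem ha; omega)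

theorem subst_id (σ : ℕ → Expr) :
    ∀ (e : Expr), (∀ x, Occurs x e → σ x = var x) → e.subst σ = e
  | var x, h => by simp [h x Occurs.var]
  | bot, _ => by simp
  | con c es, h => by
    simp only [subst_con]
    refine congrArg _ ?_
    calc es.map (subst σ) = es.map id := List.map_congr_left fun a ha =>
          subst_id σ a (fun x hx => h x (Occurs.con ha hx))
      _ = es := List.map_id es
  | fn f es, h => by
    simp only [subst_fn]
    refine congrArg _ ?_
    calc es.map (subst σ) = es.map id := List.map_congr_left fun a ha =>
          subst_id σ a (fun x hx => h x (Occurs.fn ha hx))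
      _ = es := List.map_id es
termination_by e => sizeOf e
decreasing_by
  all_goals (simp only [Expr.con.sizeOf_spec, Expr.fn.sizeOf_spec]; have := List.sizeOf_lt_of_mem ha; omega)

theorem occurs_of_varCount {x : ℕ} :
    ∀ (e : Expr), 1 ≤ e.varCount x → Occurs x e
  | var y, h => by
    rw [varCount_var] at h
    by_cases hxy : y = x
    · subst hxy; exact Occurs.var
    · simp [hxy] at h
  | bot, h => by rw [varCount] at h; omega
  | con c es, h => by
    rw [varCount_con] at h
    have : ∃ a ∈ es, varCount x a ≠ 0 := by
      by_contra hc
      push_neg at hc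
      have : (es.map (varCount x)).sum = 0 := by
        apply List.sum_eq_zero
        intro n hn
        rcases List.mem_map.1 hn with ⟨a, ha, rfl⟩
        exact hc a ha
      omega
    rcases this with ⟨a, ha, hne⟩
    exact Occurs.con ha (occurs_of_varCount a (by omega))
  | fn f es, h => by
    rw [varCount_fn] at h
    have : ∃ a ∈ es, varCount x a ≠ 0 := by
      by_contra hc
      push_neg at hc
      have : (es.map (varCount x)).sum = 0 := by
        apply List.sum_eq_zero
        intro n hn
        rcases List.mem_map.1 hn with ⟨a, ha, rfl⟩
        exact hc a ha
      omega
    rcases this with ⟨a, ha, hne⟩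
    exact Occurs.fn ha (occurs_of_varCount a (by omega))
termination_by e => sizeOf e
decreasing_by
  all_goals (simp only [Expr.con.sizeOf_spec, Expr.fn.sizeOf_spec]; have := List.sizeOf_lt_of_mem ha; omega)

theorem isTotal_subst {σ : ℕ → Expr} (hσ : ∀ x, (σ x).IsTotalTerm) {e : Expr}
    (he : e.IsTotalTerm) : (e.subst σ).IsTotalTerm :=
  ⟨isTerm_subst (fun x => (hσ x).1) he.1, nobot_subst he.2 (fun x _ => (hσ x).2)⟩

theorem subst_ne_bot {θ : ℕ → Expr} (hθ : ∀ x, (θ x).IsTotalTerm) {e : Expr}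
    (he : e ≠ Expr.bot) : e.subst θ ≠ Expr.bot := by
  cases e with
  | var x =>
    intro h
    simp at h
    have := (hθ x).2
    rw [h] at this
    cases this
  | bot => exact absurd rfl he
  | con c es => simp
  | fn f es => simp

end Expr
end ACRWL

namespace ACRWL

theorem mem_left_of_zip {α β : Type _} :
    ∀ {l1 : List α} {l2 : List β}, l1.length = l2.length → ∀ {a}, a ∈ l1 →
      ∃ b, (a, b) ∈ l1.zip l2 := by
  intro l1
  induction l1 with
  | nil => intro l2 hlen a ha; cases ha
  | cons x l1 ih =>
    intro l2 hlen a ha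
    cases l2 with
    | nil => cases hlen
    | cons y l2 =>
      rcases List.mem_cons.1 ha with h | h
      · subst h; exact ⟨y, List.mem_cons_self⟩
      · rcases ih (by simpa using hlen) h with ⟨b, hb⟩
        exact ⟨b, List.mem_cons_of_mem _ hb⟩

theorem nobot_con_inv {c : ℕ} {es : List Expr} (h : (Expr.con c es).NoBot) :
    ∀ e ∈ es, e.NoBot := by cases h with | con h => exact h

theorem isTerm_con_inv {c : ℕ} {es : List Expr} (h : (Expr.con c es).IsTerm) :
    ∀ e ∈ es, e.IsTerm := by cases h with | con h => exact h

theorem isTotal_shape {e : Expr} (h : e.IsTotalTerm) (hv : ∀ x, e ≠ Expr.var x) :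
    ∃ c ts, e = Expr.con c ts := by
  cases e with
  | var x => exact absurd rfl (hv x)
  | bot => exact absurd h.2 (by intro h'; nomatch h')
  | con c ts => exact ⟨c, ts, rfl⟩
  | fn f es => exact absurd h.1 (by intro h'; nomatch h')

section CInst
variable {C : Axioms}

theorem cinst_isTerm (hwf : WfAxioms C) {s t : Expr} (h : (s, t) ∈ CInstances C) :
    s.IsTerm ∧ t.IsTerm := by
  rcases h with ⟨p, hp, σ, hσ, h | h⟩ <;>
  · rcases h with ⟨-, heq⟩
    simp only [Prod.mk.injEq] at heq
    obtain ⟨rfl, rfl⟩ := heq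
    rcases hwf.2 p hp with ⟨h1, h2⟩
    exact ⟨Expr.isTerm_subst hσ (by first | exact h1.1 | exact h2.1),
           Expr.isTerm_subst hσ (by first | exact h2.1 | exact h1.1)⟩

theorem cinst_con (hwf : WfAxioms C) (hnc : NonCollapsing C) {s t : Expr}
    (h : (s, t) ∈ CInstances C) :
    (∃ c ts, s = Expr.con c ts) ∧ (∃ d ss, t = Expr.con d ss) := by
  rcases h with ⟨p, hp, σ, hσ, h | h⟩ <;>
  · rcases h with ⟨-, heq⟩
    simp only [Prod.mk.injEq] at heq
    obtain ⟨rfl, rfl⟩ := heq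
    rcases hwf.2 p hp with ⟨h1, h2⟩
    rcases hnc p hp with ⟨hv1, hv2⟩
    rcases isTotal_shape h1 hv1 with ⟨c1, ts1, hc1⟩
    rcases isTotal_shape h2 hv2 with ⟨c2, ts2, hc2⟩
    rw [hc1, hc2]
    simp only [Expr.subst_con]
    exact ⟨⟨_, _, rfl⟩, ⟨_, _, rfl⟩⟩

theorem cinst_nobot (hwf : WfAxioms C) (hreg : RegularAxioms C) {s t : Expr}
    (h : (s, t) ∈ CInstances C) (hnb : t.NoBot) : s.NoBot := by
  rcases h with ⟨p, hp, σ, hσ, h | h⟩ <;> rcases h with ⟨-, heq⟩ <;>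
    simp only [Prod.mk.injEq] at heq <;> obtain ⟨rfl, rfl⟩ := heq <;>
    rcases hwf.2 p hp with ⟨h1, h2⟩
  · exact Expr.nobot_subst h1.2
      (fun x hx => Expr.nobot_subst_inv ((hreg p hp x).1 hx) hnb)
  · exact Expr.nobot_subst h2.2
      (fun x hx => Expr.nobot_subst_inv ((hreg p hp x).2 hx) hnb)

theorem cinst_symm (hwf : WfAxioms C) {s t : Expr}
    (h : (s, t) ∈ CInstances C) (hnb : t.NoBot) : (t, s) ∈ CInstances C := by
  rcases h with ⟨p, hp, σ, hσ, h | h⟩ <;> rcases h with ⟨-, heq⟩ <;>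
    simp only [Prod.mk.injEq] at heq <;> obtain ⟨rfl, rfl⟩ := heq <;>
    refine ⟨p, hp, σ, hσ, ?_⟩
  · right
    refine ⟨?_, rfl⟩
    intro x hx
    exact ⟨hσ x, Expr.nobot_subst_inv
      (Expr.occurs_of_varCount _ (by omega)) hnb⟩
  · left
    refine ⟨?_, rfl⟩
    intro x hx
    exact ⟨hσ x, Expr.nobot_subst_inv
      (Expr.occurs_of_varCount _ (by omega)) hnb⟩

theorem cinst_subst {θ : ℕ → Expr} (hθ : ∀ x, (θ x).IsTotalTerm) {s t : Expr}
    (h : (s, t) ∈ CInstances C) : (s.subst θ, t.subst θ) ∈ CInstances C := by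
  rcases h with ⟨p, hp, σ, hσ, h | h⟩ <;> rcases h with ⟨hsafe, heq⟩ <;>
    simp only [Prod.mk.injEq] at heq <;> obtain ⟨rfl, rfl⟩ := heq <;>
    refine ⟨p, hp, fun x => (σ x).subst θ,
      fun x => Expr.isTerm_subst (fun y => (hθ y).1) (hσ x), ?_⟩
  · left
    refine ⟨fun x hx => Expr.isTotal_subst hθ (hsafe x hx), ?_⟩
    rw [Expr.subst_subst, Expr.subst_subst]
  · right
    refine ⟨fun x hx => Expr.isTotal_subst hθ (hsafe x hx), ?_⟩
    rw [Expr.subst_subst, Expr.subst_subst]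

end CInst

section GeqLemmas
variable {C : Axioms}

theorem geq_isTerm (hwf : WfAxioms C) {s t : Expr} (h : Geq C s t) :
    s.IsTerm ∧ t.IsTerm := by
  induction h with
  | bot h => exact ⟨h, Expr.IsTerm.bot⟩
  | refl h => exact ⟨h, h⟩
  | trans _ _ ih1 ih2 => exact ⟨ih1.1, ih2.2⟩
  | @mono c ts ss hlen _ ih =>
    constructor
    · refine Expr.IsTerm.con (fun e he => ?_)
      rcases mem_left_of_zip hlen he with ⟨b, hb⟩
      exact (ih _ hb).1
    · refine Expr.IsTerm.con (fun e he => ?_)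
      rcases mem_right_of_zip hlen he with ⟨a, ha⟩
      exact (ih _ ha).2
  | ax h => exact cinst_isTerm hwf h

theorem geq_bot_eq (hwf : WfAxioms C) (hnc : NonCollapsing C) {s t : Expr}
    (h : Geq C s t) : s = Expr.bot → t = Expr.bot := by
  induction h with
  | bot _ => intro _; rfl
  | refl _ => exact id
  | trans _ _ ih1 ih2 => intro h; exact ih2 (ih1 h)
  | mono _ _ _ => intro h; cases h
  | ax h =>
    intro hbot
    rcases (cinst_con hwf hnc h).1 with ⟨c, ts, hc⟩
    rw [hc] at hbot
    cases hbot

theorem geq_nobot (hwf : WfAxioms C) (hreg : RegularAxioms C) {s t : Expr}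
    (h : Geq C s t) (hnb : t.NoBot) : s.NoBot := by
  induction h with
  | bot _ => nomatch hnb
  | refl _ => exact hnb
  | trans _ _ ih1 ih2 => exact ih1 (ih2 hnb)
  | @mono c ts ss hlen _ ih =>
    refine Expr.NoBot.con (fun e he => ?_)
    rcases mem_left_of_zip hlen he with ⟨b, hb⟩
    exact ih _ hb (nobot_con_inv hnb _ (List.of_mem_zip hb).2)
  | ax h => exact cinst_nobot hwf hreg h hnb

theorem geq_total_symm (hwf : WfAxioms C) (hreg : RegularAxioms C) {s' s : Expr}
    (h : Geq C s' s) (hnb : s.NoBot) : Geq C s s' := by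
  induction h with
  | bot _ => nomatch hnb
  | refl h => exact Geq.refl h
  | trans h1 h2 ih1 ih2 =>
    exact Geq.trans (ih2 hnb) (ih1 (geq_nobot hwf hreg h2 hnb))
  | @mono c ts ss hlen hp ih =>
    refine Geq.mono hlen.symm (fun p hp' => ?_)
    have : (p.2, p.1) ∈ ts.zip ss := by
      have := List.zip_swap ts ss
      rw [← this] at hp'
      rcases List.mem_map.1 hp' with ⟨q, hq, hq'⟩
      cases q
      cases p
      simp [Prod.swap] at hq'
      rcases hq' with ⟨h1, h2⟩
      subst h1; subst h2
      exact hq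
    exact ih _ this (nobot_con_inv hnb _ (List.of_mem_zip this).2)
  | ax h => exact Geq.ax (cinst_symm hwf h hnb)

end GeqLemmas
end ACRWL

namespace ACRWL

theorem gorc_target_isTerm {P : Program} {st : Stm} (h : GORC P st) :
    ∀ e t, st = Stm.red e t → t.IsTerm := by
  induction h with
  | bot e => intro e' t heq; cases heq; exact Expr.IsTerm.bot
  | rrefl x => intro e' t heq; cases heq; exact Expr.IsTerm.var x
  | @dc c es ts hlen _ ih =>
    intro e' t heq; cases heq
    refine Expr.IsTerm.con (fun t' ht' => ?_)
    rcases mem_right_of_zip hlen ht' with ⟨a, ha⟩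
    exact ih _ ha _ _ rfl
  | omut _ _ _ _ _ _ ihs => intro e' t heq; cases heq; exact ihs _ _ rfl
  | orule _ _ _ _ _ _ _ _ ihr => intro e' t heq; cases heq; exact ihr _ _ rfl
  | join _ _ _ => intro e' t heq; nomatch heq

theorem gorc_refl_term {P : Program} {t : Expr} (h : t.IsTerm) :
    GORC P (Stm.red t t) := by
  induction h with
  | var x => exact GORC.rrefl x
  | bot => exact GORC.bot _
  | con _ ih =>
    refine GORC.dc rfl (fun p hp => ?_)
    rcases mem_zip_self hp with ⟨h1, h2⟩
    rw [← h1]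
    exact ih _ h2

theorem gorc_con_replace {P : Program} {st : Stm} (h : GORC P st) :
    ∀ e c ts ss, st = Stm.red e (Expr.con c ts) → ts.length = ss.length →
    (∀ p ∈ ts.zip ss, ∀ e', GORC P (Stm.red e' p.1) → GORC P (Stm.red e' p.2)) →
    GORC P (Stm.red e (Expr.con c ss)) := by
  induction h with
  | bot e =>
    intro e' c ts ss heq
    injection heq with h1 h2; cases h2
  | rrefl x =>
    intro e' c ts ss heq
    injection heq with h1 h2; cases h2
  | @dc c0 es ts0 hlen hps ih =>
    intro e' c ts ss heq hlen2 hrep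
    injection heq with h1 h2
    injection h2 with hc hts
    subst h1; subst hc; subst hts
    refine GORC.dc (hlen.trans hlen2) ?_
    exact zip_rel_trans
      (A := fun a b => GORC P (Stm.red a b))
      (B := fun b c => ∀ e', GORC P (Stm.red e' b) → GORC P (Stm.red e' c))
      (C := fun a c => GORC P (Stm.red a c))
      (fun a b c hab hbc => hbc a hab) es ts0 ss hlen hps hrep
  | @omut c0 es0 ts0 s t hne hins hlen hps hst ihps ihs =>
    intro e' c ts ss heq hlen2 hrep
    injection heq with h1 h2
    subst h1; subst h2
    refine GORC.omut (by simp) hins hlen hps ?_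
    exact ihs _ _ _ _ rfl hlen2 hrep
  | @orule es0 ρ t hne hρ hlen hps hconds hrhs ihps ihconds ihr =>
    intro e' c ts ss heq hlen2 hrep
    injection heq with h1 h2
    subst h1; subst h2
    refine GORC.orule (by simp) hρ hlen hps hconds ?_
    exact ihr _ _ _ _ rfl hlen2 hrep
  | join _ _ _ => intro e' c ts ss heq; nomatch heq

theorem gorc_mut_replace {P : Program} (hwf : WfAxioms P.C) (hnc : NonCollapsing P.C)
    {st : Stm} (h : GORC P st) :
    ∀ e s t, st = Stm.red e s → (s, t) ∈ CInstances P.C → GORC P (Stm.red e t) := by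
  induction h with
  | bot e =>
    intro e' s t heq hins
    injection heq with h1 h2
    rcases (cinst_con hwf hnc hins).1 with ⟨c, ts, hc⟩
    rw [← h2] at hc; cases hc
  | rrefl x =>
    intro e' s t heq hins
    injection heq with h1 h2
    rcases (cinst_con hwf hnc hins).1 with ⟨c, ts, hc⟩
    rw [← h2] at hc; cases hc
  | @dc c0 es ts0 hlen hps _ =>
    intro e' s t heq hins
    injection heq with h1 h2
    subst h1
    rw [← h2] at hins
    rcases (cinst_con hwf hnc hins).2 with ⟨d, ss, hd⟩
    refine GORC.omut (by rw [hd]; simp) hins hlen hps ?_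
    exact gorc_refl_term (cinst_isTerm hwf hins).2
  | @omut c0 es0 ts0 s0 t0 hne hins0 hlen hps hst ihps ihs =>
    intro e' s t heq hins
    injection heq with h1 h2
    subst h1; subst h2
    rcases (cinst_con hwf hnc hins).2 with ⟨d, ss, hd⟩
    exact GORC.omut (by rw [hd]; simp) hins0 hlen hps (ihs _ _ _ rfl hins)
  | @orule es0 ρ t0 hne hρ hlen hps hconds hrhs ihps ihconds ihr =>
    intro e' s t heq hins
    injection heq with h1 h2
    subst h1; subst h2
    rcases (cinst_con hwf hnc hins).2 with ⟨d, ss, hd⟩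
    exact GORC.orule (by rw [hd]; simp) hρ hlen hps hconds (ihr _ _ _ rfl hins)
  | join _ _ _ => intro e' s t heq; nomatch heq

theorem gorc_closure {P : Program} (hwf : WfAxioms P.C) (hnc : NonCollapsing P.C)
    {s t : Expr} (hg : Geq P.C s t) :
    ∀ e, GORC P (Stm.red e s) → GORC P (Stm.red e t) := by
  induction hg with
  | bot _ => intro e _; exact GORC.bot e
  | refl _ => intro e h; exact h
  | trans _ _ ih1 ih2 => intro e h; exact ih2 e (ih1 e h)
  | @mono c ts ss hlen _ ih =>
    intro e h
    exact gorc_con_replace h e c ts ss rfl hlen (fun p hp e' h' => ih p hp e' h')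
  | ax hins => intro e h; exact gorc_mut_replace hwf hnc h e _ _ rfl hins

theorem gorc_term_to_geq {P : Program} (hwf : WfAxioms P.C) {st : Stm} (h : GORC P st) :
    ∀ s t, st = Stm.red s t → s.IsTerm → Geq P.C s t := by
  induction h with
  | bot e => intro s t heq hs; cases heq; exact Geq.bot hs
  | rrefl x => intro s t heq hs; cases heq; exact Geq.refl hs
  | @dc c es ts hlen _ ih =>
    intro s t heq hs; cases heq
    exact Geq.mono hlen (fun p hp =>
      ih p hp _ _ rfl (isTerm_con_inv hs _ (List.of_mem_zip hp).1))
  | @omut c es ts s0 t0 hne hins hlen hps hst ih ihs =>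
    intro s t heq hs; cases heq
    have m1 : Geq P.C (Expr.con c es) (Expr.con c ts) :=
      Geq.mono hlen (fun p hp =>
        ih p hp _ _ rfl (isTerm_con_inv hs _ (List.of_mem_zip hp).1))
    have m2 : Geq P.C (Expr.con c ts) s0 := Geq.ax hins
    have m3 : Geq P.C s0 t0 := ihs _ _ rfl (cinst_isTerm hwf hins).2
    exact Geq.trans (Geq.trans m1 m2) m3
  | orule _ _ _ _ _ _ _ _ _ =>
    intro s t heq hs; cases heq; nomatch hs
  | join _ _ _ => intro s t heq; nomatch heq

theorem gorc_trans_term {P : Program} (hwf : WfAxioms P.C) (hnc : NonCollapsing P.C)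
    {e t u : Expr} (ht : t.IsTerm) (h1 : GORC P (Stm.red e t)) (h2 : GORC P (Stm.red t u)) :
    GORC P (Stm.red e u) :=
  gorc_closure hwf hnc (gorc_term_to_geq hwf h2 t u rfl ht) e h1

theorem gorc_fn_args {P : Program} (hwf : WfAxioms P.C) (hnc : NonCollapsing P.C)
    {f : ℕ} {ts as : List Expr} {t' : Expr}
    (h : GORC P (Stm.red (Expr.fn f ts) t'))
    (hlen : as.length = ts.length)
    (has : ∀ p ∈ as.zip ts, GORC P (Stm.red p.1 p.2))
    (hts : ∀ t ∈ ts, t.IsTerm) :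
    GORC P (Stm.red (Expr.fn f as) t') := by
  generalize hst : Stm.red (Expr.fn f ts) t' = st at h
  induction h with
  | bot e => injection hst with h1 h2; subst h2; exact GORC.bot _
  | rrefl x => injection hst with h1 h2; cases h1
  | dc _ _ _ => injection hst with h1 h2; cases h1
  | omut _ _ _ _ _ _ => injection hst with h1 h2; cases h1
  | @orule es0 ρ t0 hne hρ hlen2 hps hconds hrhs ihps ihconds ihr =>
    injection hst with h1 h2
    injection h1 with hf hes
    subst hf; subst hes; subst h2
    refine GORC.orule hne hρ (hlen.trans hlen2) ?_ hconds hrhs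
    refine zip_rel_trans
      (A := fun a b => GORC P (Stm.red a b) ∧ b.IsTerm)
      (B := fun b c => GORC P (Stm.red b c))
      (fun a b c hab hbc => gorc_trans_term hwf hnc hab.2 hab.1 hbc)
      as ts ρ.lhs hlen
      (fun p hp => ⟨has p hp, hts _ (List.of_mem_zip hp).2⟩) hps
  | join _ _ _ => nomatch hst

end ACRWL

namespace ACRWL

theorem rule_subst_subst (σ θ : ℕ → Expr) (ρ : Rule) :
    (ρ.subst σ).subst θ = ρ.subst (fun x => (σ x).subst θ) := by
  simp only [Rule.subst, List.map_map, Rule.mk.injEq]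
  refine ⟨trivial, ?_, ?_, ?_⟩
  · exact List.map_congr_left (fun a _ => by
      simp only [Function.comp_apply]; exact Expr.subst_subst σ θ a)
  · exact Expr.subst_subst σ θ ρ.rhs
  · exact List.map_congr_left (fun p _ => by
      simp only [Function.comp_apply]
      rw [Expr.subst_subst, Expr.subst_subst])

theorem rinst_subst {P : Program} {θ : ℕ → Expr} (hθ : ∀ x, (θ x).IsTotalTerm)
    {ρ' : Rule} (h : ρ' ∈ RInstances P) : ρ'.subst θ ∈ RInstances P := by
  rcases h with ⟨ρ, hρ, σ, hσ, rfl⟩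
  refine ⟨ρ, hρ, fun x => (σ x).subst θ,
    fun x => Expr.isTerm_subst (fun y => (hθ y).1) (hσ x), ?_⟩
  rw [rule_subst_subst]

theorem rinst_lhs_isTerm {P : Program} {ρ' : Rule} (h : ρ' ∈ RInstances P) :
    ∀ t ∈ ρ'.lhs, t.IsTerm := by
  rcases h with ⟨ρ, hρ, σ, hσ, rfl⟩
  intro t ht
  simp only [Rule.subst] at ht
  rcases List.mem_map.1 ht with ⟨a, ha, rfl⟩
  exact Expr.isTerm_subst hσ ((P.wfR ρ hρ).2.1 a ha).1

def stmSubst (θ : ℕ → Expr) : Stm → Stm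
  | Stm.red e t => Stm.red (e.subst θ) (t.subst θ)
  | Stm.join a b => Stm.join (a.subst θ) (b.subst θ)

theorem zip_map_mem {α β : Type _} (f : α → β) (g : α → β) {l1 l2 : List α}
    {p : β × β} (hp : p ∈ (l1.map f).zip (l2.map g)) :
    ∃ q ∈ l1.zip l2, p = (f q.1, g q.2) := by
  rw [List.zip_map] at hp
  rcases List.mem_map.1 hp with ⟨q, hq, rfl⟩
  exact ⟨q, hq, rfl⟩

theorem gorc_subst {P : Program} {θ : ℕ → Expr} (hθ : ∀ x, (θ x).IsTotalTerm)
    {st : Stm} (h : GORC P st) : GORC P (stmSubst θ st) := by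
  induction h with
  | bot e => simpa [stmSubst] using GORC.bot (e.subst θ)
  | rrefl x =>
    simp only [stmSubst, Expr.subst_var]
    exact gorc_refl_term (hθ x).1
  | @dc c es ts hlen hps ih =>
    simp only [stmSubst, Expr.subst_con]
    refine GORC.dc (by simp [hlen]) (fun p hp => ?_)
    rcases zip_map_mem _ _ hp with ⟨q, hq, rfl⟩
    exact ih q hq
  | @omut c es ts s t hne hins hlen hps hst ihps ihs =>
    simp only [stmSubst, Expr.subst_con]
    have hins' := cinst_subst hθ hins
    rw [Expr.subst_con] at hins'
    refine GORC.omut (Expr.subst_ne_bot hθ hne) hins' (by simp [hlen]) (fun p hp => ?_) ?_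
    · rcases zip_map_mem _ _ hp with ⟨q, hq, rfl⟩
      exact ihps q hq
    · exact ihs
  | @orule es ρ' t hne hρ hlen hps hconds hrhs ihps ihconds ihr =>
    simp only [stmSubst, Expr.subst_fn]
    have h := GORC.orule (P := P) (es := es.map (Expr.subst θ)) (ρ := ρ'.subst θ) (t := t.subst θ)
      (Expr.subst_ne_bot hθ hne) (rinst_subst hθ hρ)
      (by simp [Rule.subst, hlen])
      (by
        intro p hp
        simp only [Rule.subst] at hp
        rcases zip_map_mem _ _ hp with ⟨q, hq, rfl⟩
        exact ihps q hq)
      (by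
        intro p hp
        simp only [Rule.subst] at hp
        rcases List.mem_map.1 hp with ⟨q, hq, rfl⟩
        exact ihconds q hq)
      (by simpa [Rule.subst, stmSubst] using ihr)
    simpa [Rule.subst] using h
  | @join e e' t htot h1 h2 ih1 ih2 =>
    simp only [stmSubst]
    exact GORC.join (Expr.isTotal_subst hθ htot) ih1 ih2

end ACRWL

namespace ACRWL

theorem mem_zip_map_left {α β γ : Type _} (f : α → γ) :
    ∀ {l1 : List α} {l2 : List β} {p : γ × β}, p ∈ (l1.map f).zip l2 →
      ∃ q ∈ l1.zip l2, p = (f q.1, q.2) := by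
  intro l1
  induction l1 with
  | nil => intro l2 p hp; cases hp
  | cons a l1 ih =>
    intro l2 p hp
    cases l2 with
    | nil => cases hp
    | cons b l2 =>
      rcases List.mem_cons.1 hp with h | h
      · exact ⟨(a, b), List.mem_cons_self, h⟩
      · rcases ih h with ⟨q, hq, hq'⟩
        exact ⟨q, List.mem_cons_of_mem _ hq, hq'⟩

theorem mem_zip_map_left_rev {α β γ : Type _} (f : α → γ) :
    ∀ {l1 : List α} {l2 : List β} {q : α × β}, q ∈ l1.zip l2 →
      (f q.1, q.2) ∈ (l1.map f).zip l2 := by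
  intro l1
  induction l1 with
  | nil => intro l2 q hq; cases hq
  | cons a l1 ih =>
    intro l2 q hq
    cases l2 with
    | nil => cases hq
    | cons b l2 =>
      rcases List.mem_cons.1 hq with h | h
      · subst h; exact List.mem_cons_self
      · exact List.mem_cons_of_mem _ (ih h)

theorem mem_zip_map_right {α β : Type _} (f : α → β) :
    ∀ {l : List α} {p : α × β}, p ∈ l.zip (l.map f) → p.1 ∈ l ∧ p.2 = f p.1 := by
  intro l
  induction l with
  | nil => intro p hp; cases hp
  | cons a l ih =>
    intro p hp
    rcases List.mem_cons.1 hp with h | h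
    · subst h; exact ⟨List.mem_cons_self, rfl⟩
    · rcases ih h with ⟨h1, h2⟩
      exact ⟨List.mem_cons_of_mem _ h1, h2⟩

theorem mden_isTerm {P : Program} {σd : ℕ → Expr} {e t : Expr}
    (hwf : WfAxioms P.C) (h : MDen P σd e t) : t.IsTerm := by
  cases h with
  | bot h => exact (geq_isTerm hwf h.1).1
  | var h => exact (geq_isTerm hwf h).2
  | con _ _ hg => exact (geq_isTerm hwf hg).2
  | fn _ _ _ heq => exact (geq_isTerm hwf heq.1).1

theorem mden_bot {P : Program} {σd : ℕ → Expr} (hσ : TermSub σd) :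
    ∀ e, MDen P σd e Expr.bot
  | Expr.var x => MDen.var (Geq.bot (hσ x))
  | Expr.bot => MDen.bot ⟨Geq.refl Expr.IsTerm.bot, Geq.refl Expr.IsTerm.bot⟩
  | Expr.con c es => by
    refine MDen.con (ts := es.map fun _ => Expr.bot) (by simp) (fun p hp => ?_)
      (Geq.bot (Expr.IsTerm.con ?_))
    · rcases mem_zip_map_right _ hp with ⟨h1, h2⟩
      rw [h2]; exact mden_bot hσ p.1
    · intro u hu; rcases List.mem_map.1 hu with ⟨_, _, rfl⟩; exact Expr.IsTerm.bot
  | Expr.fn f es => by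
    refine MDen.fn (ts := es.map fun _ => Expr.bot) (by simp) (fun p hp => ?_)
      (GORC.bot _) ⟨Geq.refl Expr.IsTerm.bot, Geq.refl Expr.IsTerm.bot⟩
    rcases mem_zip_map_right _ hp with ⟨h1, h2⟩
    rw [h2]; exact mden_bot hσ p.1
termination_by e => sizeOf e
decreasing_by
  all_goals (simp only [Expr.con.sizeOf_spec, Expr.fn.sizeOf_spec]; have := List.sizeOf_lt_of_mem h1; omega)

theorem mden_self {P : Program} {σd : ℕ → Expr} (hσ : TermSub σd) :
    ∀ {t : Expr}, t.IsTerm → MDen P σd t (t.subst σd) := by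
  intro t ht
  induction ht with
  | var x => exact MDen.var (by rw [Expr.subst_var]; exact Geq.refl (hσ x))
  | bot => rw [Expr.subst_bot]; exact MDen.bot ⟨Geq.refl Expr.IsTerm.bot, Geq.refl Expr.IsTerm.bot⟩
  | @con c es hes ih =>
    rw [Expr.subst_con]
    refine MDen.con (ts := es.map (Expr.subst σd)) (by simp) (fun p hp => ?_)
      (Geq.refl (Expr.IsTerm.con ?_))
    · rcases mem_zip_map_right _ hp with ⟨h1, h2⟩
      rw [h2]; exact ih p.1 h1
    · intro u hu
      rcases List.mem_map.1 hu with ⟨a, haa, rfl⟩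
      exact Expr.isTerm_subst hσ (hes a haa)

theorem mden_to_gorc {P : Program} {V : Env} {σd : ℕ → Expr}
    (hsr : StronglyRegular P.C) (hσd : MValuation V σd)
    {e t : Expr} (h : MDen P σd e t) : GORC P (Stm.red (e.subst σd) t) := by
  have hwf := P.wfC
  obtain ⟨hreg, hnc⟩ := hsr
  induction h with
  | @bot t h =>
    have ht : t = Expr.bot := geq_bot_eq hwf hnc h.2 rfl
    subst ht
    rw [Expr.subst_bot]
    exact GORC.bot _
  | @var x t h =>
    rw [Expr.subst_var]
    exact gorc_closure hwf hnc h _ (gorc_refl_term (hσd.1 x))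
  | @con c es ts t hlen hps hg ih =>
    rw [Expr.subst_con]
    refine gorc_closure hwf hnc hg _ (GORC.dc (by simp [hlen]) (fun p hp => ?_))
    rcases mem_zip_map_left _ hp with ⟨q, hq, rfl⟩
    exact ih q hq
  | @fn f es ts t t' hlen hps hgorc heq ih =>
    rw [Expr.subst_fn]
    have hterm : ∀ u ∈ ts, u.IsTerm := fun u hu => by
      rcases mem_right_of_zip hlen hu with ⟨a, ha⟩
      exact mden_isTerm hwf (hps _ ha)
    have h1 : GORC P (Stm.red (Expr.fn f (es.map (Expr.subst σd))) t') := by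
      refine gorc_fn_args hwf hnc hgorc (by simp [hlen]) (fun p hp => ?_) hterm
      rcases mem_zip_map_left _ hp with ⟨q, hq, rfl⟩
      exact ih q hq
    exact gorc_closure hwf hnc heq.2 _ h1

theorem gorc_to_mden {P : Program} {V : Env} {σd : ℕ → Expr}
    (hsr : StronglyRegular P.C) (hσd : MValuation V σd)
    {st : Stm} (h : GORC P st) :
    ∀ e t, st = Stm.red (e.subst σd) t → MDen P σd e t := by
  have hwf := P.wfC
  obtain ⟨hreg, hnc⟩ := hsr
  induction h with
  | bot e0 =>
    intro e t heq
    injection heq with h1 h2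
    rw [← h2]
    exact mden_bot hσd.1 e
  | rrefl x =>
    intro e t heq
    injection heq with h1 h2
    subst h2
    cases e with
    | var y =>
      refine MDen.var ?_
      have hy : σd y = Expr.var x := by simpa using h1.symm
      rw [hy]
      exact Geq.refl (Expr.IsTerm.var x)
    | bot => simp at h1
    | con c0 es => simp at h1
    | fn f0 es => simp at h1
  | @dc c es0 ts hlen hps ih =>
    intro e t heq
    injection heq with h1 h2
    subst h2
    cases e with
    | var y =>
      have hy : σd y = Expr.con c es0 := by simpa using h1.symm
      have hd : GORC P (Stm.red (σd y) (Expr.con c ts)) := by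
        rw [hy]; exact GORC.dc hlen hps
      exact MDen.var (gorc_term_to_geq hwf hd _ _ rfl (hσd.1 y))
    | bot => simp at h1
    | con c0 es =>
      rw [Expr.subst_con] at h1
      injection h1 with hc hes
      subst hc
      subst hes
      refine MDen.con (ts := ts) (by simpa using hlen) (fun q hq => ?_) ?_
      · exact ih _ (mem_zip_map_left_rev _ hq) q.1 q.2 rfl
      · refine Geq.refl (Expr.IsTerm.con (fun u hu => ?_))
        rcases mem_right_of_zip hlen hu with ⟨a, ha⟩
        exact gorc_target_isTerm (hps _ ha) _ _ rfl
    | fn f0 es => simp at h1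
  | @omut c es0 ts s0 t0 hne hins hlen hps hst ihps ihs =>
    intro e t heq
    injection heq with h1 h2
    subst h2
    cases e with
    | var y =>
      have hy : σd y = Expr.con c es0 := by simpa using h1.symm
      have hd : GORC P (Stm.red (σd y) t0) := by
        rw [hy]; exact GORC.omut hne hins hlen hps hst
      exact MDen.var (gorc_term_to_geq hwf hd _ _ rfl (hσd.1 y))
    | bot => simp at h1
    | con c0 es =>
      rw [Expr.subst_con] at h1
      injection h1 with hc hes
      subst hc
      subst hes
      refine MDen.con (ts := ts) (by simpa using hlen) (fun q hq => ?_) ?_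
      · exact ihps _ (mem_zip_map_left_rev _ hq) q.1 q.2 rfl
      · exact Geq.trans (Geq.ax hins)
          (gorc_term_to_geq hwf hst _ _ rfl (cinst_isTerm hwf hins).2)
    | fn f0 es => simp at h1
  | @orule es0 ρ t0 hne hρ hlen hps hconds hrhs ihps ihconds ihr =>
    intro e t heq
    injection heq with h1 h2
    subst h2
    cases e with
    | var y =>
      have hy : σd y = Expr.fn ρ.fname es0 := by simpa using h1.symm
      have := hσd.1 y
      rw [hy] at this
      nomatch this
    | bot => simp at h1
    | con c0 es => simp at h1
    | fn f0 es =>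
      rw [Expr.subst_fn] at h1
      injection h1 with hf hes
      subst hf
      subst hes
      have ht0 : t0.IsTerm := gorc_target_isTerm hrhs _ _ rfl
      refine MDen.fn (ts := ρ.lhs) (by simpa using hlen) (fun q hq => ?_) ?_
        ⟨Geq.refl ht0, Geq.refl ht0⟩
      · exact ihps _ (mem_zip_map_left_rev _ hq) q.1 q.2 rfl
      · refine GORC.orule hne hρ rfl (fun p hp => ?_) hconds hrhs
        rcases mem_zip_self hp with ⟨hp1, hp2⟩
        rw [← hp1]
        exact gorc_refl_term (rinst_lhs_isTerm hρ _ hp2)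
  | join _ _ _ =>
    intro e t heq
    nomatch heq

end ACRWL

namespace ACRWL

def totalize : Expr → Expr
  | Expr.var x => Expr.var x
  | Expr.bot => Expr.con 0 []
  | Expr.con c es => Expr.con c (es.attach.map fun e => totalize e.1)
  | Expr.fn f es => Expr.fn f (es.attach.map fun e => totalize e.1)
termination_by e => sizeOf e
decreasing_by
  all_goals (simp only [Expr.con.sizeOf_spec, Expr.fn.sizeOf_spec]; have := List.sizeOf_lt_of_mem e.2; omega)

@[simp] theorem totalize_var (x : ℕ) : totalize (Expr.var x) = Expr.var x := by rw [totalize]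
@[simp] theorem totalize_bot : totalize Expr.bot = Expr.con 0 [] := by rw [totalize]
@[simp] theorem totalize_con (c : ℕ) (es : List Expr) :
    totalize (Expr.con c es) = Expr.con c (es.map totalize) := by
  rw [totalize]; simp [List.attach_map_val]
@[simp] theorem totalize_fn (f : ℕ) (es : List Expr) :
    totalize (Expr.fn f es) = Expr.fn f (es.map totalize) := by
  rw [totalize]; simp [List.attach_map_val]

theorem totalize_total : ∀ {e : Expr}, e.IsTerm → (totalize e).IsTotalTerm := by
  intro e h
  induction h with
  | var x => rw [totalize_var]; exact ⟨Expr.IsTerm.var x, Expr.NoBot.var x⟩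
  | bot =>
    rw [totalize_bot]
    exact ⟨Expr.IsTerm.con (by simp), Expr.NoBot.con (by simp)⟩
  | con _ ih =>
    rw [totalize_con]
    constructor
    · refine Expr.IsTerm.con (fun u hu => ?_)
      rcases List.mem_map.1 hu with ⟨a, ha, rfl⟩
      exact (ih a ha).1
    · refine Expr.NoBot.con (fun u hu => ?_)
      rcases List.mem_map.1 hu with ⟨a, ha, rfl⟩
      exact (ih a ha).2

theorem geq_totalize {C : Axioms} : ∀ {e : Expr}, e.IsTerm → Geq C (totalize e) e := by
  intro e h
  induction h with
  | var x => rw [totalize_var]; exact Geq.refl (Expr.IsTerm.var x)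
  | bot => rw [totalize_bot]; exact Geq.bot (Expr.IsTerm.con (by simp))
  | con _ ih =>
    rw [totalize_con]
    refine Geq.mono (by simp) (fun p hp => ?_)
    rcases mem_zip_map_left _ hp with ⟨q, hq, rfl⟩
    rcases mem_zip_self hq with ⟨h1, h2⟩
    rw [← h1]
    exact ih q.1 h2

theorem occurs_totalize {y : ℕ} : ∀ (e : Expr), Expr.Occurs y (totalize e) → Expr.Occurs y e
  | Expr.var x, h => by simpa using h
  | Expr.bot, h => by
    rw [totalize_bot] at h
    cases h with
    | con hmem _ => cases hmem
  | Expr.con c es, h => by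
    rw [totalize_con] at h
    cases h with
    | con hmem hocc =>
      rcases List.mem_map.1 hmem with ⟨a, ha, rfl⟩
      exact Expr.Occurs.con ha (occurs_totalize a hocc)
  | Expr.fn f es, h => by
    rw [totalize_fn] at h
    cases h with
    | fn hmem hocc =>
      rcases List.mem_map.1 hmem with ⟨a, ha, rfl⟩
      exact Expr.Occurs.fn ha (occurs_totalize a hocc)
termination_by e => sizeOf e
decreasing_by
  all_goals (simp only [Expr.con.sizeOf_spec, Expr.fn.sizeOf_spec]; have := List.sizeOf_lt_of_mem ha; omega)

theorem maxclass_total {P : Program} {V : Env} {s : Expr} (hsr : StronglyRegular P.C)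
    (hts : TermOver V s) (hmax : MaxClass P V s) : s.IsTotalTerm := by
  have h1 : Geq P.C (totalize s) s := geq_totalize hts.1
  have h2 : TermOver V (totalize s) :=
    ⟨(totalize_total hts.1).1, fun x hx => hts.2 x (occurs_totalize s hx)⟩
  have h3 := hmax _ h2 h1
  exact ⟨hts.1, geq_nobot P.wfC hsr.1 h3 (totalize_total hts.1).2⟩

theorem total_maxclass {P : Program} {V : Env} {s : Expr} (hsr : StronglyRegular P.C)
    (hnb : s.NoBot) : MaxClass P V s :=
  fun _ _ h => geq_total_symm P.wfC hsr.1 h hnb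

end ACRWL


namespace ACRWL

/-- Lemma 5.6 (characterization lemma): let `P` be a program whose set of
equational axioms is strongly regular and well-typed, and let
`[σ] = (σt, [σd])` be a valuation over the term model `M_P(V)` represented
by a substitution.  Then for all `e, a, b ∈ Expr_{Σ⊥}(X)` and all
`t ∈ Term_{Σ⊥}(X)`:
(a) `[t] ∈ ⟦e⟧^{M_P(V)}[σd]` iff `eσd →_P t`;
(b) `(M_P(V), [σd]) ⊨ e → t` iff `eσd →_P tσd`;
(c) `(M_P(V), [σd]) ⊨ a == b` iff `aσd ==_P bσd`. -/
theorem characterization_lemma (Sg : Signature) (P : Program) (V : Env)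
    (hsr : StronglyRegular P.C) (hwt : ∀ p ∈ P.C, WellTypedAxiom Sg p)
    (σd : ℕ → Expr) (hσd : MValuation V σd)
    (e a b t : Expr)
    (he : ExprOver V e) (ha : ExprOver V a) (hb : ExprOver V b)
    (ht : TermOver V t) :
    (MDen P σd e t ↔ GORC P (Stm.red (Expr.subst σd e) t)) ∧
    ((∀ s, MDen P σd t s → MDen P σd e s) ↔
        GORC P (Stm.red (Expr.subst σd e) (Expr.subst σd t))) ∧
    ((∃ s, TermOver V s ∧ MaxClass P V s ∧ MDen P σd a s ∧ MDen P σd b s) ↔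
        GORC P (Stm.join (Expr.subst σd a) (Expr.subst σd b))) := by
  have hwf := P.wfC
  have hnc := hsr.2
  have hA : ∀ e' t', MDen P σd e' t' ↔ GORC P (Stm.red (e'.subst σd) t') :=
    fun e' t' => ⟨mden_to_gorc hsr hσd, fun h => gorc_to_mden hsr hσd h e' t' rfl⟩
  refine ⟨hA e t, ⟨?_, ?_⟩, ⟨?_, ?_⟩⟩
  · -- (b) forward
    intro h
    exact (hA e _).1 (h _ (mden_self hσd.1 ht.1))
  · -- (b) backward
    intro hg s hs
    have h1 : GORC P (Stm.red (t.subst σd) s) := (hA t s).1 hs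
    exact (hA e s).2 (gorc_trans_term hwf hnc (Expr.isTerm_subst hσd.1 ht.1) hg h1)
  · -- (c) forward
    rintro ⟨s, hts, hmax, hda, hdb⟩
    exact GORC.join (maxclass_total hsr hts hmax) ((hA a s).1 hda) ((hA b s).1 hdb)
  · -- (c) backward
    intro hj
    cases hj with
    | @join _ _ u htot h1 h2 =>
      classical
      set θ : ℕ → Expr := fun x => if (V x).isSome then Expr.var x else Expr.con 0 [] with hθdef
      have hθ : ∀ x, (θ x).IsTotalTerm := by
        intro x
        by_cases h : (V x).isSome <;> simp only [hθdef, h, if_true, if_false]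
        · exact ⟨Expr.IsTerm.var x, Expr.NoBot.var x⟩
        · exact ⟨Expr.IsTerm.con (by simp), Expr.NoBot.con (by simp)⟩
      have hsub : ∀ (w : Expr), ExprOver V w → (w.subst σd).subst θ = w.subst σd := by
        intro w hw
        apply Expr.subst_id
        intro x hx
        rcases Expr.occurs_subst _ hx with ⟨y, hy1, hy2⟩
        have hvx : (V x).isSome := (hσd.2 y).2 x hy2
        simp [hθdef, hvx]
      have h1' := gorc_subst hθ h1
      have h2' := gorc_subst hθ h2
      simp only [stmSubst] at h1' h2'
      rw [hsub a ha] at h1'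
      rw [hsub b hb] at h2'
      have hterm : (u.subst θ).IsTerm := Expr.isTerm_subst (fun x => (hθ x).1) htot.1
      have hnb : (u.subst θ).NoBot := Expr.nobot_subst htot.2 (fun x _ => (hθ x).2)
      have hover : ExprOver V (u.subst θ) := by
        intro y hy
        rcases Expr.occurs_subst _ hy with ⟨x, hx1, hx2⟩
        by_cases hvx : (V x).isSome
        · simp only [hθdef, hvx, if_true] at hx2
          cases hx2
          exact hvx
        · simp only [hθdef, hvx, if_false] at hx2
          cases hx2 with
          | con hmem _ => cases hmem
      exact ⟨u.subst θ, ⟨hterm, hover⟩, total_maxclass hsr hnb,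
        (hA a _).2 h1', (hA b _).2 h2'⟩

end ACRWL
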